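/- Let Ω ⊆ ℝⁿ be an open set, F : Ω → ℝⁿ a continuous vector field and V : Ω → ℝ continuous. The following are equivalent: (i) V is both a viscosity subsolution of −F(x)·∇V(x) ≤ 0 and a viscosity supersolution of F(x)·∇V(x) ≥ 0 in Ω; (ii) the pair (V,F) is weakly increasing, i.e. for every x₀ ∈ Ω there exist ε > 0 and a C¹ curve x : (−ε,ε) → Ω with x(0) = x₀, ẋ(t) = F(x(t)) for all t ∈ (−ε,ε), and V(x(s)) ≤ V(x(t)) whenever −ε < s ≤ t < ε. -/

import Mathlib

set_option linter.unusedSectionVars false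
set_option maxHeartbeats 1000000

open Set Filter Topology
open scoped RealInnerProductSpace

section Aux

variable {E : Type*} [NormedAddCommGroup E] [InnerProductSpace ℝ E] [ProperSpace E]



lemma contDiff_quad (c : E) (a : ℝ) : ContDiff ℝ 1 (fun y : E => ‖y - c‖^2 / (2*a)) := by
  exact ((contDiff_norm_sq ℝ).comp (contDiff_id.sub contDiff_const)).div_const _

lemma hasGradientAt_quad (c x : E) {a : ℝ} (ha : 0 < a) :
    HasGradientAt (fun y : E => ‖y - c‖^2 / (2*a)) (a⁻¹ • (x - c)) x := by
  rw [hasGradientAt_iff_isLittleO]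
  have key : (fun y : E => ‖y - c‖^2/(2*a) - ‖x - c‖^2/(2*a) - ⟪a⁻¹ • (x - c), y - x⟫)
      = fun y : E => ‖y - x‖^2/(2*a) := by
    funext y
    have h1 : y - c = (y - x) + (x - c) := by abel
    rw [h1, norm_add_sq_real, real_inner_smul_left, real_inner_comm]
    field_simp
    ring
  rw [key]
  rw [Asymptotics.isLittleO_iff]
  intro ε hε
  have h2a : 0 < 2*a := by linarith
  filter_upwards [Metric.ball_mem_nhds x (show (0:ℝ) < ε * (2*a) by positivity)] with y hy
  have hd : ‖y - x‖ < ε * (2*a) := by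
    rw [Metric.mem_ball, dist_eq_norm] at hy; exact hy
  have hnn : (0:ℝ) ≤ ‖y - x‖ := norm_nonneg _
  rw [Real.norm_eq_abs, abs_of_nonneg (by positivity : (0:ℝ) ≤ ‖y - x‖^2/(2*a)), div_le_iff₀ h2a]
  nlinarith



/-- Piecewise linear interpolation of an Euler polygon. -/
noncomputable def plin (h : ℝ) (X v : ℕ → E) (t : ℝ) : E :=
  X ⌊t/h⌋₊ + (t - ⌊t/h⌋₊ * h) • v ⌊t/h⌋₊

lemma plin_grid {h : ℝ} (hh : 0 < h) (X v : ℕ → E) (k : ℕ) :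
    plin h X v (k * h) = X k := by
  have h1 : ((k : ℝ) * h) / h = (k : ℝ) := by field_simp
  simp [plin, h1, Nat.floor_natCast]

lemma plin_chain {h : ℝ} (hh : 0 < h) {X v : ℕ → E}
    (hX : ∀ k, X (k+1) = X k + h • v k) :
    ∀ (m : ℕ) (s t : ℝ) (z : E) (c : ℝ), 0 ≤ s → s ≤ t → ⌊t/h⌋₊ - ⌊s/h⌋₊ = m →
      (∀ u, s ≤ u → u ≤ t → ‖v ⌊u/h⌋₊ - z‖ ≤ c) →
      ‖plin h X v t - plin h X v s - (t-s) • z‖ ≤ c * (t-s) := by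
  intro m
  induction m with
  | zero =>
    intro s t z c hs hst hm hyp
    have hfl : ⌊s/h⌋₊ ≤ ⌊t/h⌋₊ := Nat.floor_le_floor (by gcongr)
    have hfe : ⌊t/h⌋₊ = ⌊s/h⌋₊ := by omega
    have key : plin h X v t - plin h X v s - (t-s) • z = (t-s) • (v ⌊s/h⌋₊ - z) := by
      simp only [plin, hfe]
      module
    rw [key, norm_smul, Real.norm_eq_abs, abs_of_nonneg (by linarith : (0:ℝ) ≤ t - s)]
    have h1 := hyp s le_rfl hst
    nlinarith [norm_nonneg (v ⌊s/h⌋₊ - z)]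
  | succ m ih =>
    intro s t z c hs hst hm hyp
    set ks := ⌊s/h⌋₊ with hks
    set mid := ((ks : ℝ) + 1) * h with hmid
    have hlt : s < mid := by
      have h2 : s/h < (ks:ℝ) + 1 := Nat.lt_floor_add_one (s/h)
      calc s = (s/h)*h := by field_simp
        _ < ((ks:ℝ)+1)*h := mul_lt_mul_of_pos_right h2 hh
    have hmid_nonneg : 0 ≤ mid := le_trans hs (le_of_lt hlt)
    have hfl_mid : ⌊mid/h⌋₊ = ks + 1 := by
      have h1 : mid / h = ((ks + 1 : ℕ) : ℝ) := by push_cast; field_simp; rw [hmid]; ring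
      rw [h1, Nat.floor_natCast]
    have hkst : ks + 1 ≤ ⌊t/h⌋₊ := by omega
    have hmid_le : mid ≤ t := by
      calc mid ≤ (⌊t/h⌋₊ : ℝ) * h := by
            apply mul_le_mul_of_nonneg_right _ (le_of_lt hh)
            exact_mod_cast hkst
        _ ≤ (t/h) * h := by
            apply mul_le_mul_of_nonneg_right (Nat.floor_le (by have h0t : 0 ≤ t := le_trans hs hst; positivity)) (le_of_lt hh)
        _ = t := by field_simp
    have hseg : plin h X v mid - plin h X v s = (mid - s) • v ks := by
      have e1 : plin h X v mid = X (ks + 1) := by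
        have : mid = ((ks + 1 : ℕ) : ℝ) * h := by push_cast; ring
        rw [this]; exact plin_grid hh X v (ks+1)
      rw [e1, hX ks]
      simp only [plin, ← hks, hmid]
      module
    have hih := ih mid t z c hmid_nonneg hmid_le (by omega)
      (fun u hu1 hu2 => hyp u (by linarith) hu2)
    have hsplit : plin h X v t - plin h X v s - (t-s) • z
        = (plin h X v t - plin h X v mid - (t - mid) • z)
          + ((mid - s) • v ks - (mid - s) • z) := by
      rw [← hseg]; module
    rw [hsplit]
    have hlast : ‖(mid - s) • v ks - (mid - s) • z‖ ≤ (mid - s) * c := by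
      rw [← smul_sub, norm_smul, Real.norm_eq_abs, abs_of_nonneg (by linarith : (0:ℝ) ≤ mid - s)]
      exact mul_le_mul_of_nonneg_left (hyp s le_rfl hst) (by linarith)
    calc ‖_ + _‖ ≤ ‖plin h X v t - plin h X v mid - (t - mid) • z‖
          + ‖(mid - s) • v ks - (mid - s) • z‖ := norm_add_le _ _
      _ ≤ c * (t - mid) + (mid - s) * c := add_le_add hih hlast
      _ = c * (t - s) := by ring




lemma plin_est {h : ℝ} (hh : 0 < h) {X v : ℕ → E}
    (hX : ∀ k, X (k+1) = X k + h • v k) (s t : ℝ) (z : E) (c : ℝ)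
    (hs : 0 ≤ s) (hst : s ≤ t)
    (hyp : ∀ u, s ≤ u → u ≤ t → ‖v ⌊u/h⌋₊ - z‖ ≤ c) :
    ‖plin h X v t - plin h X v s - (t-s) • z‖ ≤ c * (t-s) :=
  plin_chain hh hX _ s t z c hs hst rfl hyp

lemma plin_zero {h : ℝ} (hh : 0 < h) (X v : ℕ → E) : plin h X v 0 = X 0 := by
  have := plin_grid hh X v 0
  simpa using this

/-- Construction of an approximate Euler polygon along which `W` is almost nondecreasing. -/
lemma poly_exists [ProperSpace E] {Ω : Set E} (hΩ : IsOpen Ω) {G : E → E} (hG : ContinuousOn G Ω)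
    {W : E → ℝ} (hW : ContinuousOn W Ω)
    (Hsub : ∀ φ : E → ℝ, ContDiff ℝ 1 φ → ∀ y ∈ Ω,
      IsLocalMaxOn (fun z => W z - φ z) Ω y → 0 ≤ ⟪G y, gradient φ y⟫)
    {x₀ : E} {r M B : ℝ} (hr : 0 < r) (hKΩ : Metric.closedBall x₀ (2*r) ⊆ Ω)
    (hM : 0 < M) (hMb : ∀ y ∈ Metric.closedBall x₀ (2*r), ‖G y‖ ≤ M)
    (hB : ∀ y ∈ Metric.closedBall x₀ (2*r), |W y| ≤ B)
    {θ : ℝ} (hθ : 0 < θ) :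
    ∃ p g : ℝ → E, p 0 = x₀ ∧
      (∀ t, 0 ≤ t → t ≤ r/(2*M) → p t ∈ Metric.closedBall x₀ r) ∧
      (∀ s t, 0 ≤ s → s ≤ t → t ≤ r/(2*M) → W (p s) ≤ W (p t) + θ) ∧
      (∀ u, 0 ≤ u → u ≤ r/(2*M) → ∃ y ∈ Metric.closedBall x₀ (2*r), ‖y - p u‖ ≤ θ ∧ g u = G y) ∧
      (∀ s t, 0 ≤ s → s ≤ t → ∀ z : E, ∀ c : ℝ,
        (∀ u, s ≤ u → u ≤ t → ‖g u - z‖ ≤ c) → ‖p t - p s - (t-s) • z‖ ≤ c * (t-s)) := by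
  set K := Metric.closedBall x₀ (2*r) with hK
  have hKcomp : IsCompact K := isCompact_closedBall _ _
  have hx₀K : x₀ ∈ K := by simp only [hK, Metric.mem_closedBall, dist_self]; positivity
  have hKne : K.Nonempty := ⟨x₀, hx₀K⟩
  have hB0 : 0 ≤ B := le_trans (abs_nonneg _) (hB x₀ hx₀K)
  set ε := r/(2*M) with hε
  have hεpos : 0 < ε := by positivity
  -- uniform continuity of W on K
  have hWu : UniformContinuousOn W K := hKcomp.uniformContinuousOn_of_continuous (hW.mono hKΩ)
  obtain ⟨δW, hδW, hWmod⟩ : ∃ δ > 0, ∀ x ∈ K, ∀ y ∈ K, dist x y < δ → dist (W x) (W y) < θ/8 := by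
    rw [Metric.uniformContinuousOn_iff] at hWu
    obtain ⟨δ, hδ, hmod⟩ := hWu (θ/8) (by positivity)
    exact ⟨δ, hδ, fun x hx y hy hd => hmod x hx y hy hd⟩
  -- small parameters
  obtain ⟨d, hdpos, hdδ, hdθ, hdr⟩ : ∃ d : ℝ, 0 < d ∧ d ≤ δW/2 ∧ d ≤ θ/2 ∧ d ≤ r/2 :=
    ⟨min (δW/2) (min (θ/2) (r/2)),
      lt_min (by positivity) (lt_min (by positivity) (by positivity)),
      min_le_left _ _, le_trans (min_le_right _ _) (min_le_left _ _),
      le_trans (min_le_right _ _) (min_le_right _ _)⟩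
  obtain ⟨a, hapos, haeq⟩ : ∃ a : ℝ, 0 < a ∧ a*(4*B+1) = d^2 :=
    ⟨d^2/(4*B+1), by positivity, by field_simp⟩
  -- the maximizer map
  have exmax : ∀ x : E, ∃ y, y ∈ K ∧ IsMaxOn (fun z => W z - ‖z - x‖^2/(2*a)) K y := by
    intro x
    obtain ⟨y, hy, hmax⟩ := hKcomp.exists_isMaxOn hKne
      (((hW.mono hKΩ).sub (((contDiff_quad x a).continuous).continuousOn)))
    exact ⟨y, hy, hmax⟩
  choose Y hYK hYmax using exmax
  -- gap estimate
  have hgap : ∀ x ∈ Metric.closedBall x₀ r, ‖Y x - x‖ ≤ d := by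
    intro x hx
    have hxK : x ∈ K := by
      rw [hK]; apply Metric.closedBall_subset_closedBall (by linarith) hx
    have h3' : W x - ‖x - x‖^2/(2*a) ≤ W (Y x) - ‖Y x - x‖^2/(2*a) := hYmax x hxK
    have h2 : ‖x - x‖^2/(2*a) = 0 := by simp
    have h3 : W x - 0 ≤ W (Y x) - ‖Y x - x‖^2/(2*a) := by rw [h2] at h3'; linarith
    have hWx : |W x| ≤ B := hB x hxK
    have hWY : |W (Y x)| ≤ B := hB (Y x) (hYK x)
    have h4 : ‖Y x - x‖^2 ≤ 2*a*(2*B) := by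
      have h5 : ‖Y x - x‖^2/(2*a) ≤ W (Y x) - W x := by linarith
      have h6 : W (Y x) - W x ≤ 2*B := by
        cases' abs_le.1 hWx with hx1 hx2
        cases' abs_le.1 hWY with hy1 hy2
        linarith
      calc ‖Y x - x‖^2 = (‖Y x - x‖^2/(2*a)) * (2*a) := by field_simp
        _ ≤ (2*B) * (2*a) := by
            apply mul_le_mul_of_nonneg_right (le_trans h5 h6) (by positivity)
        _ = 2*a*(2*B) := by ring
    have h7 : 2*a*(2*B) ≤ d^2 := by nlinarith [hapos]
    nlinarith [norm_nonneg (Y x - x), hdpos]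
  -- the viscosity inequality at maximizers
  have hvisc : ∀ x ∈ Metric.closedBall x₀ r, 0 ≤ ⟪G (Y x), Y x - x⟫ := by
    intro x hx
    have hYball : Y x ∈ Metric.ball x₀ (2*r) := by
      rw [Metric.mem_ball]
      have h1 : dist (Y x) x₀ ≤ dist (Y x) x + dist x x₀ := dist_triangle _ _ _
      have h2 : dist (Y x) x ≤ d := by rw [dist_eq_norm]; exact hgap x hx
      have h3 : dist x x₀ ≤ r := Metric.mem_closedBall.1 hx
      linarith
    have hYΩ : Y x ∈ Ω := hKΩ (Metric.ball_subset_closedBall hYball)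
    have hloc : IsLocalMaxOn (fun z => W z - ‖z - x‖^2/(2*a)) Ω (Y x) := by
      have hball : ∀ᶠ z in 𝓝[Ω] (Y x), z ∈ Metric.ball x₀ (2*r) :=
        eventually_nhdsWithin_of_eventually_nhds
          (Filter.eventually_iff_exists_mem.2
            ⟨Metric.ball x₀ (2*r), Metric.isOpen_ball.mem_nhds hYball, fun z hz => hz⟩)
      filter_upwards [hball] with z hz
      exact hYmax x (Metric.ball_subset_closedBall hz)
    have hgrad : gradient (fun z : E => ‖z - x‖^2/(2*a)) (Y x) = a⁻¹ • (Y x - x) :=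
      (hasGradientAt_quad x (Y x) hapos).gradient
    have := Hsub (fun z => ‖z - x‖^2/(2*a)) (contDiff_quad x a) (Y x) hYΩ hloc
    rw [hgrad, real_inner_smul_right] at this
    have hai : 0 < a⁻¹ := by positivity
    nlinarith
  -- choose the number of steps
  obtain ⟨N, h, hhpos, hNh, hhMδ, hhMθ, hstep_err⟩ :
      ∃ (N : ℕ) (h : ℝ), 0 < h ∧ (N:ℝ)*h = ε ∧ h*M < δW/2 ∧ h*M < θ/2 ∧
        ε * h * M^2 / (2*a) ≤ θ/8 := by
    have hm1pos : 0 < min (δW/2) (θ/2) := lt_min (by positivity) (by positivity)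
    obtain ⟨N, hN⟩ := exists_nat_gt (max (ε*M/(min (δW/2) (θ/2))) (4*ε^2*M^2/(a*θ)) + 1)
    have hNpos : 0 < (N:ℝ) := by
      have h1 : (0:ℝ) ≤ max (ε*M/(min (δW/2) (θ/2))) (4*ε^2*M^2/(a*θ)) :=
        le_max_of_le_left (by positivity)
      linarith
    have hNlarge1 : ε*M/(min (δW/2) (θ/2)) < (N:ℝ) := by
      have := le_max_left (ε*M/(min (δW/2) (θ/2))) (4*ε^2*M^2/(a*θ))
      linarith
    have hNlarge2 : 4*ε^2*M^2/(a*θ) < (N:ℝ) := by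
      have := le_max_right (ε*M/(min (δW/2) (θ/2))) (4*ε^2*M^2/(a*θ))
      linarith
    refine ⟨N, ε/N, by positivity, by field_simp, ?_, ?_, ?_⟩
    · rw [div_lt_iff₀ hm1pos] at hNlarge1
      have h2 : ε/N*M < min (δW/2) (θ/2) := by
        rw [div_mul_eq_mul_div, div_lt_iff₀ hNpos]
        linarith [mul_comm ((N:ℝ)) (min (δW/2) (θ/2))]
      exact lt_of_lt_of_le h2 (min_le_left _ _)
    · rw [div_lt_iff₀ hm1pos] at hNlarge1
      have h2 : ε/N*M < min (δW/2) (θ/2) := by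
        rw [div_mul_eq_mul_div, div_lt_iff₀ hNpos]
        linarith [mul_comm ((N:ℝ)) (min (δW/2) (θ/2))]
      exact lt_of_lt_of_le h2 (min_le_right _ _)
    · rw [div_lt_iff₀ (by positivity : (0:ℝ) < a*θ)] at hNlarge2
      have hq : ε * (ε/N) * M^2 / (2*a) = ε^2*M^2/(2*a*N) := by
        field_simp
      rw [hq, div_le_iff₀ (by positivity : (0:ℝ) < 2*a*(N:ℝ))]
      nlinarith
  -- the Euler polygon
  obtain ⟨X, hX0, hXs⟩ : ∃ X : ℕ → E, X 0 = x₀ ∧ ∀ k, X (k+1) = X k + h • G (Y (X k)) :=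
    ⟨fun k => Nat.rec x₀ (fun _ xk => xk + h • G (Y xk)) k, rfl, fun k => rfl⟩
  set v : ℕ → E := fun k => G (Y (X k)) with hv
  have hXstep : ∀ k, X (k+1) = X k + h • v k := hXs
  have hvM : ∀ k, ‖v k‖ ≤ M := fun k => hMb _ (hYK _)
  set p : ℝ → E := plin h X v with hp
  set g : ℝ → E := fun u => v ⌊u/h⌋₊ with hg
  have hp0 : p 0 = x₀ := by rw [hp, plin_zero hhpos, hX0]
  have hest : ∀ s t, 0 ≤ s → s ≤ t → ∀ (z : E) (c : ℝ),
      (∀ u, s ≤ u → u ≤ t → ‖g u - z‖ ≤ c) → ‖p t - p s - (t-s) • z‖ ≤ c*(t-s) :=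
    fun s t hs hst z c hyp => plin_est hhpos hXstep s t z c hs hst hyp
  have hpnorm : ∀ t, 0 ≤ t → ‖p t - x₀‖ ≤ M*t := by
    intro t ht
    have := hest 0 t le_rfl ht 0 M (fun u _ _ => by simpa using hvM _)
    simpa [hp0] using this
  have hsubball : Metric.closedBall x₀ r ⊆ K := by
    rw [hK]; exact Metric.closedBall_subset_closedBall (by linarith)
  have hpball : ∀ t, 0 ≤ t → t ≤ ε → p t ∈ Metric.closedBall x₀ r := by
    intro t ht htε
    rw [Metric.mem_closedBall, dist_eq_norm]
    have h1 := hpnorm t ht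
    have h2 : M*t ≤ M*ε := by gcongr
    have h3 : M*ε = r/2 := by rw [hε]; field_simp
    linarith
  have hXp : ∀ k : ℕ, X k = p ((k:ℝ)*h) := fun k => (plin_grid hhpos X v k).symm
  have hXball : ∀ k : ℕ, (k:ℝ)*h ≤ ε → X k ∈ Metric.closedBall x₀ r := by
    intro k hk
    rw [hXp k]
    exact hpball _ (by positivity) hk
  -- the sup-convolution
  obtain ⟨Wa, hWa⟩ : ∃ Wa : E → ℝ, ∀ x, Wa x = W (Y x) - ‖Y x - x‖^2/(2*a) :=
    ⟨fun x => W (Y x) - ‖Y x - x‖^2/(2*a), fun _ => rfl⟩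
  have hWle : ∀ x ∈ K, W x ≤ Wa x := by
    intro x hx
    have h1 : W x - ‖x - x‖^2/(2*a) ≤ W (Y x) - ‖Y x - x‖^2/(2*a) := hYmax x hx
    have h0 : ‖x - x‖^2/(2*a) = 0 := by simp
    rw [h0] at h1
    rw [hWa]
    linarith
  have hWaW : ∀ x, Wa x ≤ W (Y x) := by
    intro x
    rw [hWa]
    have h0 : (0:ℝ) ≤ ‖Y x - x‖^2/(2*a) := by positivity
    linarith
  -- the one-step inequality
  have hstep : ∀ k : ℕ, (k:ℝ)*h ≤ ε → Wa (X k) - h^2*M^2/(2*a) ≤ Wa (X (k+1)) := by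
    intro k hk
    have hXk : X k ∈ Metric.closedBall x₀ r := hXball k hk
    have h1 : W (Y (X k)) - ‖Y (X k) - X (k+1)‖^2/(2*a) ≤ Wa (X (k+1)) := by
      have h1' : W (Y (X k)) - ‖Y (X k) - X (k+1)‖^2/(2*a)
          ≤ W (Y (X (k+1))) - ‖Y (X (k+1)) - X (k+1)‖^2/(2*a) := hYmax (X (k+1)) (hYK (X k))
      rw [hWa]
      exact h1'
    have hexp : ‖Y (X k) - X (k+1)‖^2 ≤ ‖Y (X k) - X k‖^2 + h^2*M^2 := by
      rw [hXstep k]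
      have he : Y (X k) - (X k + h • v k) = (Y (X k) - X k) - h • v k := by module
      rw [he, norm_sub_sq_real]
      have hip : 0 ≤ ⟪Y (X k) - X k, h • v k⟫ := by
        rw [real_inner_smul_right]
        have hvq := hvisc (X k) hXk
        have : ⟪Y (X k) - X k, v k⟫ = ⟪G (Y (X k)), Y (X k) - X k⟫ := by
          rw [hv]; exact real_inner_comm _ _
        rw [this]
        exact mul_nonneg hhpos.le hvq
      have hnv : ‖h • v k‖^2 ≤ h^2*M^2 := by
        rw [norm_smul, Real.norm_eq_abs, abs_of_pos hhpos]
        have h1 : (h*‖v k‖)^2 = h^2*‖v k‖^2 := by ring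
        rw [h1]
        have h2 : ‖v k‖^2 ≤ M^2 := by nlinarith [hvM k, norm_nonneg (v k)]
        exact mul_le_mul_of_nonneg_left h2 (sq_nonneg h)
      linarith
    have h2a : (0:ℝ) < 2*a := by positivity
    have h2 : ‖Y (X k) - X (k+1)‖^2/(2*a) ≤ (‖Y (X k) - X k‖^2 + h^2*M^2)/(2*a) := by gcongr
    rw [add_div] at h2
    have h3 : Wa (X k) = W (Y (X k)) - ‖Y (X k) - X k‖^2/(2*a) := by rw [hWa]
    linarith
  -- iterated
  have hchain : ∀ (l k : ℕ), k ≤ l → (l:ℝ)*h ≤ ε →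
      Wa (X k) ≤ Wa (X l) + ((l-k : ℕ):ℝ)*(h^2*M^2/(2*a)) := by
    intro l
    induction l with
    | zero =>
      intro k hk _
      have : k = 0 := Nat.le_zero.mp hk
      simp [this]
    | succ l ih =>
      intro k hk hl
      rcases Nat.eq_or_lt_of_le hk with rfl | hlt
      · simp
      · have hkl : k ≤ l := Nat.lt_succ_iff.mp hlt
        have hlh : (l:ℝ)*h ≤ ε := by
          refine le_trans ?_ hl
          have : (l:ℝ) ≤ (l:ℝ)+1 := by linarith
          push_cast
          nlinarith [hhpos]
        have hih := ih k hkl hlh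
        have hs := hstep l hlh
        have hcast : (((l+1)-k : ℕ):ℝ) = ((l-k : ℕ):ℝ) + 1 := by
          rw [Nat.succ_sub hkl]
          push_cast
          ring
        rw [hcast]
        have hpos : (0:ℝ) ≤ h^2*M^2/(2*a) := by positivity
        linarith
  have herrtot : ∀ (l k : ℕ), k ≤ l → (l:ℝ)*h ≤ ε → Wa (X k) ≤ Wa (X l) + θ/8 := by
    intro l k hk hl
    have h1 := hchain l k hk hl
    have h2 : ((l-k : ℕ):ℝ)*(h^2*M^2/(2*a)) ≤ θ/8 := by
      have h3 : ((l-k : ℕ):ℝ) ≤ (l:ℝ) := by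
        have : l - k ≤ l := Nat.sub_le _ _
        exact_mod_cast this
      have h4 : ((l-k : ℕ):ℝ)*(h^2*M^2/(2*a)) ≤ (l:ℝ)*(h^2*M^2/(2*a)) := by
        apply mul_le_mul_of_nonneg_right h3 (by positivity)
      have h5 : (l:ℝ)*(h^2*M^2/(2*a)) = ((l:ℝ)*h)*(h*M^2/(2*a)) := by
        field_simp
      have h6 : ((l:ℝ)*h)*(h*M^2/(2*a)) ≤ ε*(h*M^2/(2*a)) := by
        apply mul_le_mul_of_nonneg_right hl (by positivity)
      have h7 : ε*(h*M^2/(2*a)) = ε * h * M^2 / (2*a) := by ring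
      linarith [hstep_err]
    linarith
  -- floor facts
  have hfloor_le : ∀ t:ℝ, 0 ≤ t → ((⌊t/h⌋₊:ℝ))*h ≤ t := by
    intro t ht
    calc ((⌊t/h⌋₊:ℝ))*h ≤ (t/h)*h := by
          apply mul_le_mul_of_nonneg_right (Nat.floor_le (by positivity)) hhpos.le
      _ = t := by field_simp
  have hfloor_gt : ∀ t:ℝ, 0 ≤ t → t < ((⌊t/h⌋₊:ℝ)+1)*h := by
    intro t ht
    have h1 : t/h < (⌊t/h⌋₊:ℝ)+1 := Nat.lt_floor_add_one _
    calc t = (t/h)*h := by field_simp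
      _ < ((⌊t/h⌋₊:ℝ)+1)*h := mul_lt_mul_of_pos_right h1 hhpos
  have hpgrid : ∀ t:ℝ, 0 ≤ t → ‖p t - X ⌊t/h⌋₊‖ ≤ h*M := by
    intro t ht
    have he : p t - X ⌊t/h⌋₊ = (t - (⌊t/h⌋₊:ℝ)*h) • v ⌊t/h⌋₊ := by
      rw [hp]
      show X ⌊t/h⌋₊ + (t - ⌊t/h⌋₊ * h) • v ⌊t/h⌋₊ - X ⌊t/h⌋₊ = _
      module
    rw [he, norm_smul, Real.norm_eq_abs,
      abs_of_nonneg (by linarith [hfloor_le t ht] : (0:ℝ) ≤ t - (⌊t/h⌋₊:ℝ)*h)]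
    have h1 : t - (⌊t/h⌋₊:ℝ)*h ≤ h := by linarith [hfloor_gt t ht]
    have h2 := hvM ⌊t/h⌋₊
    nlinarith [norm_nonneg (v ⌊t/h⌋₊)]
  -- monotonicity along the polygon
  have hmono : ∀ s t, 0 ≤ s → s ≤ t → t ≤ ε → W (p s) ≤ W (p t) + θ := by
    intro s t hs hst htε
    have ht : 0 ≤ t := le_trans hs hst
    set ks := ⌊s/h⌋₊ with hks
    set kt := ⌊t/h⌋₊ with hkt
    have hksle : ks ≤ kt := Nat.floor_le_floor (by gcongr)
    have hktε : (kt:ℝ)*h ≤ ε := le_trans (hfloor_le t ht) htε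
    have hksε : (ks:ℝ)*h ≤ ε := by
      refine le_trans ?_ hktε
      have : (ks:ℝ) ≤ (kt:ℝ) := by exact_mod_cast hksle
      exact mul_le_mul_of_nonneg_right this hhpos.le
    have hXks : X ks ∈ Metric.closedBall x₀ r := hXball ks hksε
    have hXkt : X kt ∈ Metric.closedBall x₀ r := hXball kt hktε
    have hpsK : p s ∈ K := hsubball (hpball s hs (le_trans hst htε))
    have hptK : p t ∈ K := hsubball (hpball t ht htε)
    have hXksK : X ks ∈ K := hsubball hXks
    have hXktK : X kt ∈ K := hsubball hXkt
    have hYXktK : Y (X kt) ∈ K := hYK _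
    have hd1 : dist (p s) (X ks) < δW := by
      rw [dist_eq_norm]
      linarith [hpgrid s hs, hhMδ, hδW]
    have hd2 : dist (p t) (X kt) < δW := by
      rw [dist_eq_norm]
      linarith [hpgrid t ht, hhMδ, hδW]
    have hd3 : dist (X kt) (Y (X kt)) < δW := by
      rw [dist_eq_norm, norm_sub_rev]
      linarith [hgap (X kt) hXkt, hdδ, hδW]
    have hw1 : |W (p s) - W (X ks)| < θ/8 := by
      have := hWmod (p s) hpsK (X ks) hXksK hd1
      rwa [Real.dist_eq] at this
    have hw2 : |W (p t) - W (X kt)| < θ/8 := by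
      have := hWmod (p t) hptK (X kt) hXktK hd2
      rwa [Real.dist_eq] at this
    have hw3 : |W (X kt) - W (Y (X kt))| < θ/8 := by
      have := hWmod (X kt) hXktK (Y (X kt)) hYXktK hd3
      rwa [Real.dist_eq] at this
    have hc1 : W (X ks) ≤ Wa (X ks) := hWle _ hXksK
    have hc2 : Wa (X ks) ≤ Wa (X kt) + θ/8 := herrtot kt ks hksle hktε
    have hc3 : Wa (X kt) ≤ W (Y (X kt)) := hWaW _
    have ha1 := abs_lt.1 hw1
    have ha2 := abs_lt.1 hw2
    have ha3 := abs_lt.1 hw3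
    linarith only [ha1.2, ha2.1, ha3.1, hc1, hc2, hc3, hθ]
  -- assemble
  refine ⟨p, g, hp0, fun t ht htε => hpball t ht htε, hmono, ?_, ?_⟩
  · intro u hu huε
    refine ⟨Y (X ⌊u/h⌋₊), hYK _, ?_, rfl⟩
    have hkh : (⌊u/h⌋₊:ℝ)*h ≤ ε := le_trans (hfloor_le u hu) huε
    have hXk := hXball _ hkh
    have h1 := hgap (X ⌊u/h⌋₊) hXk
    have h2 := hpgrid u hu
    have h3 : d ≤ θ/2 := hdθ
    have h4 : h*M < θ/2 := hhMθ
    calc ‖Y (X ⌊u/h⌋₊) - p u‖ ≤ ‖Y (X ⌊u/h⌋₊) - X ⌊u/h⌋₊‖ + ‖X ⌊u/h⌋₊ - p u‖ := by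
          have : Y (X ⌊u/h⌋₊) - p u = (Y (X ⌊u/h⌋₊) - X ⌊u/h⌋₊) + (X ⌊u/h⌋₊ - p u) := by module
          rw [this]; exact norm_add_le _ _
      _ ≤ d + h*M := by
          rw [norm_sub_rev (X ⌊u/h⌋₊) (p u)]
          exact add_le_add h1 h2
      _ ≤ θ := by linarith
  · exact fun s t hs hst z c hyp => hest s t hs hst z c hyp



/-- Existence of a local forward trajectory along which `W` is nondecreasing. -/
lemma key_forward {Ω : Set E} (hΩ : IsOpen Ω) {G : E → E} (hG : ContinuousOn G Ω)
    {W : E → ℝ} (hW : ContinuousOn W Ω)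
    (Hsub : ∀ φ : E → ℝ, ContDiff ℝ 1 φ → ∀ y ∈ Ω,
      IsLocalMaxOn (fun z => W z - φ z) Ω y → 0 ≤ ⟪G y, gradient φ y⟫)
    {x₀ : E} (hx₀ : x₀ ∈ Ω) :
    ∃ ε > (0:ℝ), ∃ x : ℝ → E, x 0 = x₀ ∧ (∀ t ∈ Icc 0 ε, x t ∈ Ω) ∧
      (∀ t ∈ Ico 0 ε, HasDerivWithinAt x (G (x t)) (Ico 0 ε) t) ∧
      (∀ s t : ℝ, 0 ≤ s → s ≤ t → t ≤ ε → W (x s) ≤ W (x t)) := by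
  -- choose a ball around x₀
  obtain ⟨ρ, hρ, hball⟩ := Metric.isOpen_iff.1 hΩ x₀ hx₀
  set r := ρ/3 with hr'
  have hr : 0 < r := by positivity
  set K := Metric.closedBall x₀ (2*r) with hKdef
  have hKΩ : K ⊆ Ω := by
    refine subset_trans ?_ hball
    rw [hKdef]
    intro z hz
    rw [Metric.mem_closedBall] at hz
    rw [Metric.mem_ball]
    rw [hr'] at hz
    linarith
  have hKcomp : IsCompact K := isCompact_closedBall _ _
  -- bounds for G and W on K
  obtain ⟨M₀, hM₀⟩ := hKcomp.exists_bound_of_continuousOn (hG.mono hKΩ)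
  obtain ⟨B, hB⟩ := hKcomp.exists_bound_of_continuousOn (hW.mono hKΩ)
  set M := max M₀ 1 with hMdef
  have hM : 0 < M := lt_of_lt_of_le one_pos (le_max_right _ _)
  have hMb : ∀ y ∈ K, ‖G y‖ ≤ M := fun y hy => le_trans (hM₀ y hy) (le_max_left _ _)
  have hBb : ∀ y ∈ K, |W y| ≤ B := fun y hy => by
    have := hB y hy; rwa [Real.norm_eq_abs] at this
  set ε := r/(2*M) with hεdef
  have hεpos : 0 < ε := by positivity
  -- the approximating polygons
  have hpoly : ∀ j : ℕ, ∃ p g : ℝ → E, p 0 = x₀ ∧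
      (∀ t, 0 ≤ t → t ≤ ε → p t ∈ Metric.closedBall x₀ r) ∧
      (∀ s t, 0 ≤ s → s ≤ t → t ≤ ε → W (p s) ≤ W (p t) + 1/(j+1)) ∧
      (∀ u, 0 ≤ u → u ≤ ε → ∃ y ∈ K, ‖y - p u‖ ≤ 1/(j+1) ∧ g u = G y) ∧
      (∀ s t, 0 ≤ s → s ≤ t → ∀ z : E, ∀ c : ℝ,
        (∀ u, s ≤ u → u ≤ t → ‖g u - z‖ ≤ c) → ‖p t - p s - (t-s) • z‖ ≤ c * (t-s)) := by
    intro j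
    exact poly_exists hΩ hG hW Hsub hr hKΩ hM hMb hBb (by positivity : (0:ℝ) < 1/(j+1))
  choose p g hp0 hpball hpmono hpaim hpest using hpoly
  -- Lipschitz bound for the polygons
  have hplip : ∀ j, ∀ s t : ℝ, 0 ≤ s → s ≤ t → t ≤ ε → ‖p j t - p j s‖ ≤ M * (t - s) := by
    intro j s t hs hst htε
    have h1 := hpest j s t hs hst 0 M (fun u hu1 hu2 => by
      obtain ⟨y, hyK, -, hgu⟩ := hpaim j u (le_trans hs hu1) (le_trans hu2 htε)
      rw [hgu, sub_zero]
      exact hMb y hyK)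
    simpa using h1
  -- extract a cluster point in the product space
  set K' := Metric.closedBall x₀ r with hK'def
  have hK'comp : IsCompact K' := isCompact_closedBall _ _
  have hK'K : K' ⊆ K := Metric.closedBall_subset_closedBall (by linarith)
  haveI : CompactSpace K' := isCompact_iff_compactSpace.mp hK'comp
  set Q : ℕ → (Icc (0:ℝ) ε → K') := fun j t => ⟨p j t.1, hpball j t.1 t.2.1 t.2.2⟩ with hQdef
  obtain ⟨q, hq⟩ : ∃ q : Icc (0:ℝ) ε → K', MapClusterPt q atTop Q := by
    obtain ⟨q, hq⟩ := exists_clusterPt_of_compactSpace (map Q atTop)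
    exact ⟨q, hq⟩
  -- the limit trajectory
  set x : ℝ → E := fun t => if ht : t ∈ Icc (0:ℝ) ε then (q ⟨t, ht⟩ : E) else x₀ with hxdef
  have hxval : ∀ (t : ℝ) (ht : t ∈ Icc (0:ℝ) ε), x t = (q ⟨t, ht⟩ : E) := by
    intro t ht
    rw [hxdef]
    simp [ht]
  have hxK' : ∀ t, ∀ ht : t ∈ Icc (0:ℝ) ε, x t ∈ K' := by
    intro t ht
    rw [hxval t ht]
    exact (q ⟨t, ht⟩).2
  -- approximation property
  have approx : ∀ (s t : ℝ) (hs : s ∈ Icc (0:ℝ) ε) (ht : t ∈ Icc (0:ℝ) ε) (η : ℝ), 0 < η →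
      ∃ j : ℕ, 1/((j:ℝ)+1) ≤ η ∧ dist (p j s) (x s) < η ∧ dist (p j t) (x t) < η := by
    intro s t hs ht η hη
    set U : Set (Icc (0:ℝ) ε → K') :=
      {f | dist (f ⟨s, hs⟩ : E) (q ⟨s, hs⟩ : E) < η ∧ dist (f ⟨t, ht⟩ : E) (q ⟨t, ht⟩ : E) < η}
      with hUdef
    have hUopen : IsOpen U := by
      have h1 : IsOpen {f : Icc (0:ℝ) ε → K' | dist (f ⟨s, hs⟩ : E) (q ⟨s, hs⟩ : E) < η} := by
        have : Continuous fun f : Icc (0:ℝ) ε → K' => dist (f ⟨s, hs⟩ : E) (q ⟨s, hs⟩ : E) :=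
          (continuous_subtype_val.comp (continuous_apply _)).dist continuous_const
        exact isOpen_lt this continuous_const
      have h2 : IsOpen {f : Icc (0:ℝ) ε → K' | dist (f ⟨t, ht⟩ : E) (q ⟨t, ht⟩ : E) < η} := by
        have : Continuous fun f : Icc (0:ℝ) ε → K' => dist (f ⟨t, ht⟩ : E) (q ⟨t, ht⟩ : E) :=
          (continuous_subtype_val.comp (continuous_apply _)).dist continuous_const
        exact isOpen_lt this continuous_const
      exact h1.inter h2
    have hqU : q ∈ U := by
      constructor <;> simpa using hη
    have hfreq : ∃ᶠ j in atTop, Q j ∈ U := (mapClusterPt_iff_frequently.mp hq) U (hUopen.mem_nhds hqU)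
    obtain ⟨J, hJ⟩ := exists_nat_gt (1/η)
    have hev : ∀ᶠ j : ℕ in atTop, 1/((j:ℝ)+1) ≤ η := by
      filter_upwards [eventually_ge_atTop J] with j hj
      rw [div_le_iff₀ (by positivity : (0:ℝ) < (j:ℝ)+1)]
      rw [div_lt_iff₀ hη] at hJ
      have : (J:ℝ) ≤ (j:ℝ) := by exact_mod_cast hj
      nlinarith
    obtain ⟨j, hjU, hjη⟩ := (hfreq.and_eventually hev).exists
    refine ⟨j, hjη, ?_, ?_⟩
    · have := hjU.1
      rw [hQdef] at this
      simpa [hxval s hs] using this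
    · have := hjU.2
      rw [hQdef] at this
      simpa [hxval t ht] using this
  -- x 0 = x₀
  have h0I : (0:ℝ) ∈ Icc (0:ℝ) ε := ⟨le_rfl, hεpos.le⟩
  have hx0 : x 0 = x₀ := by
    by_contra hne
    have hd0 : 0 < dist x₀ (x 0) := dist_pos.mpr (fun he => hne (he.symm))
    obtain ⟨j, -, hd, -⟩ := approx 0 0 h0I h0I (dist x₀ (x 0)) hd0
    rw [hp0 j] at hd
    exact absurd hd (lt_irrefl _)
  have hxΩ : ∀ t ∈ Icc (0:ℝ) ε, x t ∈ Ω := fun t ht => hKΩ (hK'K (hxK' t ht))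
  -- monotonicity of W along x
  have hxmono : ∀ s t : ℝ, 0 ≤ s → s ≤ t → t ≤ ε → W (x s) ≤ W (x t) := by
    intro s t hs hst htε
    have hsI : s ∈ Icc (0:ℝ) ε := ⟨hs, le_trans hst htε⟩
    have htI : t ∈ Icc (0:ℝ) ε := ⟨le_trans hs hst, htε⟩
    refine le_of_forall_pos_le_add ?_
    intro η hη
    have hcs : ContinuousWithinAt W Ω (x s) := hW.continuousWithinAt (hxΩ s hsI)
    have hct : ContinuousWithinAt W Ω (x t) := hW.continuousWithinAt (hxΩ t htI)
    rw [Metric.continuousWithinAt_iff] at hcs hct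
    obtain ⟨δ₁, hδ₁, hc1⟩ := hcs (η/4) (by positivity)
    obtain ⟨δ₂, hδ₂, hc2⟩ := hct (η/4) (by positivity)
    obtain ⟨j, hjθ, hd1, hd2⟩ := approx s t hsI htI (min (min δ₁ δ₂) (η/4)) (by positivity)
    have hpsΩ : p j s ∈ Ω := hKΩ (hK'K (hpball j s hs (le_trans hst htε)))
    have hptΩ : p j t ∈ Ω := hKΩ (hK'K (hpball j t (le_trans hs hst) htε))
    have e1 : |W (p j s) - W (x s)| < η/4 := by
      have := hc1 hpsΩ
        (lt_of_lt_of_le hd1 (le_trans (min_le_left _ _) (min_le_left _ _)))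
      rwa [Real.dist_eq] at this
    have e2 : |W (p j t) - W (x t)| < η/4 := by
      have := hc2 hptΩ
        (lt_of_lt_of_le hd2 (le_trans (min_le_left _ _) (min_le_right _ _)))
      rwa [Real.dist_eq] at this
    have e3 := hpmono j s t hs hst htε
    have e4 : 1/((j:ℝ)+1) ≤ η/4 := le_trans hjθ (min_le_right _ _)
    have f1 := abs_lt.1 e1
    have f2 := abs_lt.1 e2
    linarith [f1.1, f1.2, f2.1, f2.2]
  -- derivative
  have hxderiv : ∀ t ∈ Ico (0:ℝ) ε, HasDerivWithinAt x (G (x t)) (Ico 0 ε) t := by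
    intro s hsI
    have hsIcc : s ∈ Icc (0:ℝ) ε := ⟨hsI.1, hsI.2.le⟩
    have hxsK : x s ∈ K := hK'K (hxK' s hsIcc)
    rw [hasDerivWithinAt_iff_isLittleO, Asymptotics.isLittleO_iff]
    intro c hc
    have hGu : UniformContinuousOn G K := hKcomp.uniformContinuousOn_of_continuous (hG.mono hKΩ)
    rw [Metric.uniformContinuousOn_iff] at hGu
    obtain ⟨δG, hδG, hGmod⟩ := hGu c hc
    set δ₂ := δG/(2+4*M) with hδ₂def
    have hδ₂pos : 0 < δ₂ := by positivity
    have main : ∀ t ∈ Icc (0:ℝ) ε, |t - s| ≤ δ₂ →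
        ‖x t - x s - (t-s) • G (x s)‖ ≤ c * |t-s| := by
      intro t htI hts
      refine le_of_forall_pos_le_add ?_
      intro η hη
      obtain ⟨j, hjθ, hds, hdt⟩ := approx s t hsIcc htI (min (η/2) (δG/8)) (by positivity)
      have hjsmall : 1/((j:ℝ)+1) ≤ δG/8 := le_trans hjθ (min_le_right _ _)
      have hds' : ‖p j s - x s‖ < δG/8 :=
        lt_of_lt_of_le (by rw [← dist_eq_norm]; exact hds) (min_le_right _ _)
      have hslope : ∀ u, min s t ≤ u → u ≤ max s t → ‖g j u - G (x s)‖ ≤ c := by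
        intro u hu1 hu2
        have hu0 : 0 ≤ u := le_trans (le_min hsIcc.1 htI.1) hu1
        have huε : u ≤ ε := le_trans hu2 (max_le hsIcc.2 htI.2)
        obtain ⟨y, hyK, hyd, hgu⟩ := hpaim j u hu0 huε
        rw [hgu]
        have hyp1 : ‖y - p j u‖ ≤ δG/8 := le_trans hyd hjsmall
        have hyp2 : ‖p j u - p j s‖ ≤ M*δ₂ := by
          rcases le_total s u with hsu | hus
          · have := hplip j s u hsIcc.1 hsu huε
            have hub : u - s ≤ δ₂ := by
              have : u ≤ max s t := hu2
              rcases le_total s t with h' | h'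
              · rw [max_eq_right h'] at this
                rw [abs_le] at hts
                linarith [hts.2]
              · rw [max_eq_left h'] at this
                linarith
            calc ‖p j u - p j s‖ ≤ M*(u-s) := hplip j s u hsIcc.1 hsu huε
              _ ≤ M*δ₂ := by gcongr
          · have hlb : s - u ≤ δ₂ := by
              have : min s t ≤ u := hu1
              rcases le_total s t with h' | h'
              · rw [min_eq_left h'] at this
                linarith
              · rw [min_eq_right h'] at this
                rw [abs_le] at hts
                linarith [hts.1]
            calc ‖p j u - p j s‖ = ‖p j s - p j u‖ := norm_sub_rev _ _
              _ ≤ M*(s-u) := hplip j u s hu0 hus hsIcc.2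
              _ ≤ M*δ₂ := by gcongr
        have hdy : dist y (x s) < δG := by
          have htr : dist y (x s) ≤ ‖y - p j u‖ + ‖p j u - p j s‖ + ‖p j s - x s‖ := by
            rw [dist_eq_norm]
            have hiden : y - x s = (y - p j u) + (p j u - p j s) + (p j s - x s) := by module
            rw [hiden]
            exact le_trans (norm_add_le _ _) (by gcongr; exact norm_add_le _ _)
          have hM2 : M*δ₂ ≤ δG/4 := by
            rw [hδ₂def, ← mul_div_assoc, div_le_div_iff₀ (by positivity) (by positivity)]
            nlinarith [hδG, hM]
          linarith
        have := hGmod y hyK (x s) hxsK hdy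
        rw [dist_eq_norm] at this
        exact this.le
      have hpoly_est : ‖p j t - p j s - (t-s) • G (x s)‖ ≤ c * |t-s| := by
        rcases le_total s t with hst | hts'
        · have := hpest j s t hsIcc.1 hst (G (x s)) c (fun u hu1 hu2 =>
            hslope u (le_trans (min_le_left _ _) hu1) (le_trans hu2 (le_max_right _ _)))
          rwa [abs_of_nonneg (by linarith : (0:ℝ) ≤ t - s)]
        · have h1 := hpest j t s htI.1 hts' (G (x s)) c (fun u hu1 hu2 =>
            hslope u (le_trans (min_le_right _ _) hu1) (le_trans hu2 (le_max_left _ _)))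
          have h2 : p j t - p j s - (t-s) • G (x s) = -(p j s - p j t - (s-t) • G (x s)) := by
            module
          rw [h2, norm_neg]
          rwa [abs_of_nonpos (by linarith : t - s ≤ 0), neg_sub]
      have hdt' : ‖x t - p j t‖ ≤ η/2 := by
        rw [← dist_eq_norm']
        exact le_of_lt (lt_of_lt_of_le hdt (min_le_left _ _))
      have hds'' : ‖p j s - x s‖ ≤ η/2 := by
        rw [← dist_eq_norm]
        exact le_of_lt (lt_of_lt_of_le hds (min_le_left _ _))
      have hiden : x t - x s - (t-s) • G (x s)
          = (x t - p j t) + (p j t - p j s - (t-s) • G (x s)) + (p j s - x s) := by module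
      calc ‖x t - x s - (t-s) • G (x s)‖
          ≤ ‖x t - p j t‖ + ‖p j t - p j s - (t-s) • G (x s)‖ + ‖p j s - x s‖ := by
            rw [hiden]
            exact le_trans (norm_add_le _ _) (by gcongr; exact norm_add_le _ _)
        _ ≤ η/2 + c * |t-s| + η/2 := add_le_add (add_le_add hdt' hpoly_est) hds''
        _ = c * |t-s| + η := by ring
    have hball : ∀ᶠ t in 𝓝 s, |t - s| ≤ δ₂ := by
      filter_upwards [Metric.ball_mem_nhds s hδ₂pos] with t ht
      rw [Metric.mem_ball, Real.dist_eq] at ht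
      exact ht.le
    filter_upwards [self_mem_nhdsWithin, eventually_nhdsWithin_of_eventually_nhds hball]
      with t ht1 ht2
    have := main t (Ico_subset_Icc_self ht1) ht2
    rwa [Real.norm_eq_abs (t-s)]
  exact ⟨ε, hεpos, x, hx0, hxΩ, hxderiv, hxmono⟩



lemma gradient_neg' {φ : E → ℝ} (hφ : ContDiff ℝ 1 φ) (y : E) :
    gradient (fun z => -φ z) y = -gradient φ y := by
  have hd : HasGradientAt φ (gradient φ y) y :=
    ((hφ.differentiable one_ne_zero) y).hasGradientAt
  have hf : HasFDerivAt φ (InnerProductSpace.toDual ℝ E (gradient φ y)) y :=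
    hasGradientAt_iff_hasFDerivAt.mp hd
  have hneg : HasGradientAt (fun z => -φ z) (-(gradient φ y)) y := by
    rw [hasGradientAt_iff_hasFDerivAt, map_neg]
    exact hf.neg
  exact hneg.gradient

theorem stmt_2' (Ω : Set E) (hΩ : IsOpen Ω)
    (F : E → E) (hF : ContinuousOn F Ω)
    (V : E → ℝ) (hV : ContinuousOn V Ω) :
    ((∀ φ : E → ℝ, ContDiff ℝ 1 φ → ∀ x₀ ∈ Ω,
        IsLocalMaxOn (fun x => V x - φ x) Ω x₀ → -⟪F x₀, gradient φ x₀⟫ ≤ 0) ∧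
     (∀ φ : E → ℝ, ContDiff ℝ 1 φ → ∀ x₀ ∈ Ω,
        IsLocalMinOn (fun x => V x - φ x) Ω x₀ → 0 ≤ ⟪F x₀, gradient φ x₀⟫))
    ↔
    (∀ x₀ ∈ Ω, ∃ ε > (0:ℝ), ∃ x : ℝ → E,
        x 0 = x₀ ∧ (∀ t ∈ Ioo (-ε) ε, x t ∈ Ω) ∧
        (∀ t ∈ Ioo (-ε) ε, HasDerivWithinAt x (F (x t)) (Ioo (-ε) ε) t) ∧
        ∀ s t : ℝ, -ε < s → s ≤ t → t < ε → V (x s) ≤ V (x t)) := by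
  constructor
  · rintro ⟨hsub, hsup⟩ x₀ hx₀
    -- forward trajectory
    obtain ⟨ε₁, hε₁, xp, hxp0, hxpΩ, hxpD, hxpM⟩ :=
      key_forward hΩ hF hV (fun φ hφ y hy hmax => by
        have := hsub φ hφ y hy hmax
        linarith) hx₀
    -- backward trajectory (for -F and -V)
    obtain ⟨ε₂, hε₂, z, hz0, hzΩ, hzD, hzM⟩ :=
      key_forward hΩ (G := fun y => -F y) (hF.neg) (W := fun y => -V y) (hV.neg)
        (fun φ hφ y hy hmax => by
          have hmin : IsLocalMinOn (fun x => V x - (fun z => -φ z) x) Ω y := by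
            have h1 : ∀ᶠ z in 𝓝[Ω] y, -V z - φ z ≤ -V y - φ y := hmax
            filter_upwards [h1] with w hw
            show V y - -φ y ≤ V w - -φ w
            linarith
          have h2 := hsup (fun z => -φ z) (hφ.neg) y hy hmin
          rw [gradient_neg' hφ y] at h2
          rw [inner_neg_left, inner_neg_right] at *
          linarith [h2]) hx₀
    set ε := min ε₁ ε₂ with hεdef
    have hεpos : 0 < ε := lt_min hε₁ hε₂
    set x : ℝ → E := fun t => if 0 ≤ t then xp t else z (-t) with hxdef
    have hxpos : ∀ t : ℝ, 0 ≤ t → x t = xp t := fun t ht => by rw [hxdef]; simp [ht]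
    have hxneg : ∀ t : ℝ, t ≤ 0 → x t = z (-t) := by
      intro t ht
      rcases lt_or_eq_of_le ht with h | h
      · rw [hxdef]; simp [not_le.mpr h]
      · subst h  -- wrong direction? t = 0 case
        rw [hxdef]
        simp [hxp0, hz0]
    have hx0 : x 0 = x₀ := by rw [hxpos 0 le_rfl, hxp0]
    refine ⟨ε, hεpos, x, hx0, ?_, ?_, ?_⟩
    · -- membership
      intro t ht
      rcases le_total 0 t with h | h
      · rw [hxpos t h]
        exact hxpΩ t ⟨h, le_trans ht.2.le (min_le_left _ _)⟩
      · rw [hxneg t h]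
        refine hzΩ (-t) ⟨by linarith, ?_⟩
        have := ht.1
        have h2 : -t ≤ ε := by linarith
        exact le_trans h2 (min_le_right _ _)
    · -- derivative
      intro t ht
      rcases lt_trichotomy t 0 with hneg | hzero | hpos
      · -- t < 0
        have hmt : -t ∈ Ico (0:ℝ) ε₂ := by
          constructor
          · linarith
          · have := ht.1; have : -t < ε := by linarith
            exact lt_of_lt_of_le this (min_le_right _ _)
        have hmem : Ico (0:ℝ) ε₂ ∈ 𝓝 (-t) := Ico_mem_nhds (by linarith) hmt.2
        have hz1 : HasDerivAt z (-F (z (-t))) (-t) := (hzD (-t) hmt).hasDerivAt hmem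
        have hcomp : HasDerivAt (fun u : ℝ => z (-u)) ((-1 : ℝ) • (-F (z (-t)))) t := by
          have hn : HasDerivAt (fun u : ℝ => -u) (-1 : ℝ) t := hasDerivAt_neg t
          exact HasDerivAt.scomp t hz1 hn
        have heq : (fun u : ℝ => z (-u)) =ᶠ[𝓝 t] x := by
          filter_upwards [Iio_mem_nhds hneg] with u hu
          rw [hxneg u (le_of_lt hu)]
        have hx1 : HasDerivAt x ((-1 : ℝ) • (-F (z (-t)))) t := hcomp.congr_of_eventuallyEq heq.symm
        have hval : ((-1 : ℝ) • (-F (z (-t)))) = F (x t) := by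
          rw [hxneg t hneg.le]
          simp
        rw [hval] at hx1
        exact hx1.hasDerivWithinAt
      · -- t = 0
        subst hzero
        have hr : HasDerivWithinAt x (F x₀) (Ici 0) 0 := by
          have h1 : HasDerivWithinAt xp (F (xp 0)) (Ico 0 ε₁) 0 := hxpD 0 ⟨le_rfl, hε₁⟩
          rw [hxp0] at h1
          have h2 : HasDerivWithinAt xp (F x₀) (Ici 0) 0 := by
            apply h1.mono_of_mem_nhdsWithin
            rw [show Ico (0:ℝ) ε₁ = Ici 0 ∩ Iio ε₁ from rfl]
            exact inter_mem self_mem_nhdsWithin (nhdsWithin_le_nhds (Iio_mem_nhds hε₁))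
          exact h2.congr (fun u hu => hxpos u hu) (by rw [hxpos 0 le_rfl])
        have hl : HasDerivWithinAt x (F x₀) (Iic 0) 0 := by
          have h1 : HasDerivWithinAt z (-F (z 0)) (Ico 0 ε₂) 0 := hzD 0 ⟨le_rfl, hε₂⟩
          rw [hz0] at h1
          have h2 : HasDerivWithinAt z (-F x₀) (Ici 0) 0 := by
            apply h1.mono_of_mem_nhdsWithin
            rw [show Ico (0:ℝ) ε₂ = Ici 0 ∩ Iio ε₂ from rfl]
            exact inter_mem self_mem_nhdsWithin (nhdsWithin_le_nhds (Iio_mem_nhds hε₂))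
          have hn : HasDerivWithinAt (fun u : ℝ => -u) (-1 : ℝ) (Iic 0) 0 :=
            (hasDerivAt_neg (0:ℝ)).hasDerivWithinAt
          have hmt : MapsTo (fun u : ℝ => -u) (Iic 0) (Ici 0) := fun u hu => by
            simp only [mem_Ici]; simp only [mem_Iic] at hu; linarith
          have hcomp := HasDerivWithinAt.scomp_of_eq 0 h2 hn hmt (by norm_num)
          have heq : ∀ u ∈ Iic (0:ℝ), x u = (z ∘ fun u : ℝ => -u) u := fun u hu => hxneg u hu
          have := hcomp.congr heq (by rw [hxneg 0 le_rfl]; rfl)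
          have hval : ((-1 : ℝ) • (-F x₀)) = F x₀ := by simp
          rwa [hval] at this
        have hunion := hl.union hr
        have hsub2 : Ioo (-ε) ε ⊆ Iic 0 ∪ Ici 0 := fun u _ => le_total u 0
        have := hunion.mono hsub2
        rw [hx0]
        exact this
      · -- t > 0
        have htm : t ∈ Ico (0:ℝ) ε₁ := ⟨hpos.le, lt_of_lt_of_le ht.2 (min_le_left _ _)⟩
        have hmem : Ico (0:ℝ) ε₁ ∈ 𝓝 t := Ico_mem_nhds hpos htm.2
        have h1 : HasDerivAt xp (F (xp t)) t := (hxpD t htm).hasDerivAt hmem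
        have heq : xp =ᶠ[𝓝 t] x := by
          filter_upwards [Ioi_mem_nhds hpos] with u hu
          rw [hxpos u (le_of_lt hu)]
        have hx1 : HasDerivAt x (F (xp t)) t := h1.congr_of_eventuallyEq heq.symm
        rw [← hxpos t hpos.le] at hx1
        exact hx1.hasDerivWithinAt
    · -- monotonicity
      intro s t hs hst ht
      rcases le_total 0 s with h0s | hs0
      · rw [hxpos s h0s, hxpos t (le_trans h0s hst)]
        exact hxpM s t h0s hst (le_trans ht.le (min_le_left _ _))
      · rcases le_total t 0 with ht0 | h0t
        · rw [hxneg s hs0, hxneg t ht0]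
          have h3 := hzM (-t) (-s) (by linarith) (by linarith)
            (le_trans (by linarith : -s ≤ ε) (min_le_right _ _))
          have h4 : -V (z (-t)) ≤ -V (z (-s)) := h3
          linarith
        · have h1 : V (x s) ≤ V x₀ := by
            rw [hxneg s hs0]
            have := hzM 0 (-s) le_rfl (by linarith)
              (le_trans (by linarith : -s ≤ ε) (min_le_right _ _))
            rw [hz0] at this
            have h5 : -V x₀ ≤ -V (z (-s)) := this
            linarith
          have h2 : V x₀ ≤ V (x t) := by
            rw [hxpos t h0t, ← hxp0]
            exact hxpM 0 t le_rfl h0t (le_trans ht.le (min_le_left _ _))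
          linarith
  · -- easy direction
    rintro hweak
    constructor
    · intro φ hφ x₀ hx₀ hmax
      obtain ⟨ε, hε, x, hx0, hxΩ, hxD, hxM⟩ := hweak x₀ hx₀
      have h0m : (0:ℝ) ∈ Ioo (-ε) ε := ⟨by linarith, hε⟩
      have hD : HasDerivAt x (F x₀) 0 := by
        have := hxD 0 h0m
        rw [hx0] at this
        exact this.hasDerivAt (isOpen_Ioo.mem_nhds h0m)
      have hgrad : HasFDerivAt φ (InnerProductSpace.toDual ℝ E (gradient φ x₀)) x₀ :=
        hasGradientAt_iff_hasFDerivAt.mp ((hφ.differentiable one_ne_zero) x₀).hasGradientAt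
      have hψ : HasDerivAt (φ ∘ x) (⟪gradient φ x₀, F x₀⟫) 0 := by
        have := HasFDerivAt.comp_hasDerivAt_of_eq (x := 0) hgrad hD hx0.symm
        rwa [InnerProductSpace.toDual_apply_apply] at this
      -- right derivative nonneg
      have hψs : HasDerivWithinAt (φ ∘ x) (⟪gradient φ x₀, F x₀⟫) (Ioi 0) 0 :=
        hψ.hasDerivWithinAt
      rw [hasDerivWithinAt_iff_tendsto_slope] at hψs
      have hdiff : Ioi (0:ℝ) \ {0} = Ioi 0 := diff_singleton_eq_self (by simp)
      rw [hdiff] at hψs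
      have hslope_nonneg : ∀ᶠ t in 𝓝[>] (0:ℝ), 0 ≤ slope (φ ∘ x) 0 t := by
        have hcont : ContinuousAt x 0 := hD.continuousAt
        have hmax' : ∀ᶠ w in 𝓝 x₀, w ∈ Ω → V w - φ w ≤ V x₀ - φ x₀ := by
          have := hmax
          rw [IsLocalMaxOn, IsMaxFilter] at this
          rw [← eventually_nhdsWithin_iff]
          exact this
        have hmax'' : ∀ᶠ w in 𝓝 (x 0), w ∈ Ω → V w - φ w ≤ V x₀ - φ x₀ := by rwa [hx0]
        have hpull : ∀ᶠ t in 𝓝 (0:ℝ), x t ∈ Ω → V (x t) - φ (x t) ≤ V x₀ - φ x₀ :=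
          hcont.eventually hmax''
        filter_upwards [eventually_nhdsWithin_of_eventually_nhds hpull,
          eventually_nhdsWithin_of_eventually_nhds (Iio_mem_nhds hε),
          self_mem_nhdsWithin] with t htmax htε htpos
        have htI : t ∈ Ioo (-ε) ε := ⟨by linarith [mem_Ioi.mp htpos], htε⟩
        have hxtΩ : x t ∈ Ω := hxΩ t htI
        have hVmono : V x₀ ≤ V (x t) := by
          rw [← hx0]
          exact hxM 0 t (by linarith) (le_of_lt htpos) htε
        have hφineq : φ x₀ ≤ φ (x t) := by
          have := htmax hxtΩ
          linarith
        rw [slope_def_field]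
        apply div_nonneg
        · simp only [Function.comp_apply, hx0]
          linarith
        · simp only [sub_zero]
          exact (le_of_lt htpos)
      have hlim : 0 ≤ ⟪gradient φ x₀, F x₀⟫ :=
        ge_of_tendsto hψs hslope_nonneg
      rw [real_inner_comm] at hlim
      linarith
    · intro φ hφ x₀ hx₀ hmin
      obtain ⟨ε, hε, x, hx0, hxΩ, hxD, hxM⟩ := hweak x₀ hx₀
      have h0m : (0:ℝ) ∈ Ioo (-ε) ε := ⟨by linarith, hε⟩
      have hD : HasDerivAt x (F x₀) 0 := by
        have := hxD 0 h0m
        rw [hx0] at this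
        exact this.hasDerivAt (isOpen_Ioo.mem_nhds h0m)
      have hgrad : HasFDerivAt φ (InnerProductSpace.toDual ℝ E (gradient φ x₀)) x₀ :=
        hasGradientAt_iff_hasFDerivAt.mp ((hφ.differentiable one_ne_zero) x₀).hasGradientAt
      have hψ : HasDerivAt (φ ∘ x) (⟪gradient φ x₀, F x₀⟫) 0 := by
        have := HasFDerivAt.comp_hasDerivAt_of_eq (x := 0) hgrad hD hx0.symm
        rwa [InnerProductSpace.toDual_apply_apply] at this
      have hψs : HasDerivWithinAt (φ ∘ x) (⟪gradient φ x₀, F x₀⟫) (Iio 0) 0 :=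
        hψ.hasDerivWithinAt
      rw [hasDerivWithinAt_iff_tendsto_slope] at hψs
      have hdiff : Iio (0:ℝ) \ {0} = Iio 0 := diff_singleton_eq_self (by simp)
      rw [hdiff] at hψs
      have hslope_nonneg : ∀ᶠ t in 𝓝[<] (0:ℝ), 0 ≤ slope (φ ∘ x) 0 t := by
        have hcont : ContinuousAt x 0 := hD.continuousAt
        have hmin' : ∀ᶠ w in 𝓝 x₀, w ∈ Ω → V x₀ - φ x₀ ≤ V w - φ w := by
          have := hmin
          rw [IsLocalMinOn, IsMinFilter] at this
          rw [← eventually_nhdsWithin_iff]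
          exact this
        have hmin'' : ∀ᶠ w in 𝓝 (x 0), w ∈ Ω → V x₀ - φ x₀ ≤ V w - φ w := by rwa [hx0]
        have hpull : ∀ᶠ t in 𝓝 (0:ℝ), x t ∈ Ω → V x₀ - φ x₀ ≤ V (x t) - φ (x t) :=
          hcont.eventually hmin''
        filter_upwards [eventually_nhdsWithin_of_eventually_nhds hpull,
          eventually_nhdsWithin_of_eventually_nhds (Ioi_mem_nhds (by linarith : -ε < (0:ℝ))),
          self_mem_nhdsWithin] with t htmin htε htneg
        have htI : t ∈ Ioo (-ε) ε := ⟨htε, by linarith [mem_Iio.mp htneg]⟩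
        have hxtΩ : x t ∈ Ω := hxΩ t htI
        have hVmono : V (x t) ≤ V x₀ := by
          rw [← hx0]
          exact hxM t 0 htε (le_of_lt htneg) hε
        have hφineq : φ (x t) ≤ φ x₀ := by
          have := htmin hxtΩ
          linarith
        rw [slope_def_field]
        apply div_nonneg_of_nonpos
        · simp only [Function.comp_apply, hx0]
          linarith
        · simp only [sub_zero]
          exact (le_of_lt htneg)
      have hlim : 0 ≤ ⟪gradient φ x₀, F x₀⟫ := ge_of_tendsto hψs hslope_nonneg
      rwa [real_inner_comm] at hlim

end Aux

/-- `V` is a viscosity subsolution of `-F·∇V ≤ 0` and a viscosity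
supersolution of `F·∇V ≥ 0` iff the pair `(V,F)` is weakly increasing. -/
theorem stmt_2 {n : ℕ} (Ω : Set (EuclideanSpace ℝ (Fin n))) (hΩ : IsOpen Ω)
    (F : EuclideanSpace ℝ (Fin n) → EuclideanSpace ℝ (Fin n)) (hF : ContinuousOn F Ω)
    (V : EuclideanSpace ℝ (Fin n) → ℝ) (hV : ContinuousOn V Ω) :
    ((∀ φ : EuclideanSpace ℝ (Fin n) → ℝ, ContDiff ℝ 1 φ → ∀ x₀ ∈ Ω,
        IsLocalMaxOn (fun x => V x - φ x) Ω x₀ → -⟪F x₀, gradient φ x₀⟫ ≤ 0) ∧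
     (∀ φ : EuclideanSpace ℝ (Fin n) → ℝ, ContDiff ℝ 1 φ → ∀ x₀ ∈ Ω,
        IsLocalMinOn (fun x => V x - φ x) Ω x₀ → 0 ≤ ⟪F x₀, gradient φ x₀⟫))
    ↔
    (∀ x₀ ∈ Ω, ∃ ε > (0:ℝ), ∃ x : ℝ → EuclideanSpace ℝ (Fin n),
        x 0 = x₀ ∧ (∀ t ∈ Ioo (-ε) ε, x t ∈ Ω) ∧
        (∀ t ∈ Ioo (-ε) ε, HasDerivWithinAt x (F (x t)) (Ioo (-ε) ε) t) ∧
        ∀ s t : ℝ, -ε < s → s ≤ t → t < ε → V (x s) ≤ V (x t)) :=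
  stmt_2' Ω hΩ F hF V hV
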